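/- Let q > 2 be a prime power. If there exists an [n,k,d]_{q²} linear code whose Hermitian hull has dimension ℓ′, then for every integer ℓ with 0 ≤ ℓ ≤ ℓ′ there exists an [n,k,d]_{q²} linear code whose Hermitian hull has dimension exactly ℓ. -/

import Mathlib

noncomputable section

/-- The Hermitian dual of a linear code over a field with `q^2` elements. -/
def hdual {F : Type*} [Field F] (q : ℕ) {n : ℕ} (C : Submodule F (Fin n → F)) :
    Submodule F (Fin n → F) where
  carrier := {x | ∀ c ∈ C, ∑ i, x i * c i ^ q = 0}
  add_mem' := by
    intro x y hx hy c hc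
    have hx' := hx c hc
    have hy' := hy c hc
    have : ∑ i, (x + y) i * c i ^ q = (∑ i, x i * c i ^ q) + ∑ i, y i * c i ^ q := by
      rw [← Finset.sum_add_distrib]
      exact Finset.sum_congr rfl fun i _ => by simp [add_mul]
    simp only [Set.mem_setOf_eq] at *
    rw [this, hx', hy', add_zero]
  zero_mem' := by intro c hc; simp
  smul_mem' := by
    intro s x hx c hc
    have hx' := hx c hc
    have : ∑ i, (s • x) i * c i ^ q = s * ∑ i, x i * c i ^ q := by
      rw [Finset.mul_sum]
      exact Finset.sum_congr rfl fun i _ => by simp [mul_assoc]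
    simp only [Set.mem_setOf_eq] at *
    rw [this, hx', mul_zero]
/-- The Hamming weight of a word. -/
def wt {F : Type*} [Field F] {n : ℕ} (c : Fin n → F) : ℕ := Set.ncard {i | c i ≠ 0}

lemma mem_hdual {F : Type*} [Field F] {q n : ℕ} {C : Submodule F (Fin n → F)}
    {x : Fin n → F} : x ∈ hdual q C ↔ ∀ c ∈ C, ∑ i, x i * c i ^ q = 0 := Iff.rfl

lemma hdual_symm {q n : ℕ} {F : Type*} [Field F] [Fintype F] (hF : Fintype.card F = q ^ 2)
    (hQ : ∃ φ : F →+* F, ∀ x : F, φ x = x ^ q) {C : Submodule F (Fin n → F)}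
    {x z : Fin n → F} (hx : x ∈ hdual q C) (hz : z ∈ C) :
    ∑ i, z i * x i ^ q = 0 := by
  obtain ⟨φ, hφ⟩ := hQ
  have hz2 : ∀ a : F, (a ^ q) ^ q = a := by
    intro a
    calc (a ^ q) ^ q = a ^ (q * q) := (pow_mul a q q).symm
    _ = a ^ q ^ 2 := by rw [pow_two]
    _ = a := by rw [← hF]; exact FiniteField.pow_card a
  have h0 : ∑ i, x i * z i ^ q = 0 := hx z hz
  calc ∑ i, z i * x i ^ q = φ (∑ i, x i * z i ^ q) := by
        rw [map_sum]
        refine Finset.sum_congr rfl fun i _ => ?_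
        rw [map_mul, hφ, hφ, hz2, mul_comm]
  _ = 0 := by rw [h0, map_zero]

lemma exists_scalar {q : ℕ} (hq3 : 3 ≤ q) {F : Type*} [Field F] [Fintype F]
    (hF : Fintype.card F = q ^ 2) : ∃ α : F, α ≠ 0 ∧ α ^ (q + 1) ≠ 1 := by
  obtain ⟨g, hg⟩ := IsCyclic.exists_generator (α := Fˣ)
  have horder : orderOf g = Nat.card Fˣ := orderOf_eq_card_of_forall_mem_zpowers hg
  have hcard : Nat.card Fˣ = q ^ 2 - 1 := by
    rw [Nat.card_units, Nat.card_eq_fintype_card, hF]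
  refine ⟨(g : F), Units.ne_zero g, fun h1 => ?_⟩
  have hgp : g ^ (q + 1) = 1 := by
    rw [← Units.val_eq_one, Units.val_pow_eq_pow_val, h1]
  have hdvd : q ^ 2 - 1 ∣ q + 1 := by
    rw [← hcard, ← horder]; exact orderOf_dvd_of_pow_eq_one hgp
  have hle := Nat.le_of_dvd (by omega) hdvd
  have hqq : q ^ 2 = q * q := pow_two q
  have h9 : 3 * q ≤ q * q := Nat.mul_le_mul_right q hq3
  omega

def scaleEquiv {F : Type*} [Field F] {n : ℕ} (s : Fin n → F) (hs : ∀ i, s i ≠ 0) :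
    (Fin n → F) ≃ₗ[F] (Fin n → F) where
  toFun z := fun i => s i * z i
  map_add' z w := by ext i; simp [mul_add]
  map_smul' a z := by ext i; simp [Pi.smul_apply, smul_eq_mul]; ring
  invFun z := fun i => (s i)⁻¹ * z i
  left_inv z := by ext i; field_simp; exact mul_div_cancel_left₀ _ (hs i)
  right_inv z := by ext i; field_simp; exact mul_div_cancel_left₀ _ (hs i)

lemma wt_scale {F : Type*} [Field F] {n : ℕ} (s : Fin n → F) (hs : ∀ i, s i ≠ 0)
    (z : Fin n → F) : Set.ncard {i | s i * z i ≠ 0} = Set.ncard {i | z i ≠ 0} := by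
  congr 1
  ext i
  simp [mul_ne_zero_iff, hs i]

lemma step {q n : ℕ} (hq3 : 3 ≤ q) {F : Type*} [Field F] [Fintype F]
    (hF : Fintype.card F = q ^ 2) (hQ : ∃ φ : F →+* F, ∀ x : F, φ x = x ^ q)
    (d : ℕ) (C : Submodule F (Fin n → F))
    (hd : ∀ c ∈ C, c ≠ 0 → d ≤ wt c) (hd' : ∃ c ∈ C, c ≠ 0 ∧ wt c = d)
    {m : ℕ} (hhull : Module.finrank F ↥(C ⊓ hdual q C) = m + 1) :
    ∃ D : Submodule F (Fin n → F),
      Module.finrank F ↥D = Module.finrank F ↥C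
      ∧ (∀ c ∈ D, c ≠ 0 → d ≤ wt c) ∧ (∃ c ∈ D, c ≠ 0 ∧ wt c = d)
      ∧ Module.finrank F ↥(D ⊓ hdual q D) = m := by
  classical
  obtain ⟨α, hα0, hα1⟩ := exists_scalar hq3 hF
  -- a nonzero element of the hull
  have hne : C ⊓ hdual q C ≠ ⊥ := by
    intro h
    rw [h, finrank_bot] at hhull
    omega
  obtain ⟨x, hxH, hx0⟩ := Submodule.exists_mem_ne_zero_of_ne_bot hne
  obtain ⟨j, hxj⟩ : ∃ j, x j ≠ 0 := by
    by_contra h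
    push_neg at h
    exact hx0 (funext h)
  have hxC : x ∈ C := hxH.1
  have hxD : x ∈ hdual q C := hxH.2
  set s : Fin n → F := fun i => if i = j then α else 1 with hs_def
  have hs : ∀ i, s i ≠ 0 := by
    intro i
    simp only [hs_def]
    split
    · exact hα0
    · exact one_ne_zero
  set e := scaleEquiv s hs with he_def
  have he_apply : ∀ (z : Fin n → F) (i : Fin n), (e : (Fin n → F) →ₗ[F] (Fin n → F)) z i
      = s i * z i := fun z i => rfl
  have hlam : α ^ (q + 1) - 1 ≠ 0 := sub_ne_zero.mpr hα1
  have key : ∀ z c : Fin n → F, ∑ i, (s i * z i) * (s i * c i) ^ q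
      = (∑ i, z i * c i ^ q) + (α ^ (q + 1) - 1) * (z j * c j ^ q) := by
    intro z c
    have hterm : ∀ i ∈ Finset.univ, (s i * z i) * (s i * c i) ^ q
        = z i * c i ^ q + (if i = j then (α ^ (q + 1) - 1) * (z j * c j ^ q) else 0) := by
      intro i _
      by_cases hij : i = j
      · subst hij
        have h1 : s i = α := if_pos rfl
        rw [show (if i = i then (α ^ (q + 1) - 1) * (z i * c i ^ q) else 0)
            = (α ^ (q + 1) - 1) * (z i * c i ^ q) from if_pos rfl, h1, mul_pow]
        ring
      · simp [hs_def, hij]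
    rw [Finset.sum_congr rfl hterm, Finset.sum_add_distrib,
      Finset.sum_ite_eq' Finset.univ j (fun _ => (α ^ (q + 1) - 1) * (z j * c j ^ q))]
    simp
  -- the new code
  set D := C.map (e : (Fin n → F) →ₗ[F] (Fin n → F)) with hD_def
  have hwt : ∀ z : Fin n → F, wt ((e : (Fin n → F) →ₗ[F] (Fin n → F)) z) = wt z := by
    intro z
    exact wt_scale s hs z
  -- the hull of D
  have hhullD : D ⊓ hdual q D
      = ((C ⊓ hdual q C) ⊓ LinearMap.ker (LinearMap.proj j)).map
          (e : (Fin n → F) →ₗ[F] (Fin n → F)) := by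
    ext w
    simp only [Submodule.mem_inf, Submodule.mem_map, LinearMap.mem_ker, LinearMap.proj_apply,
      hD_def]
    constructor
    · rintro ⟨⟨z, hzC, rfl⟩, hw2⟩
      have H : ∀ c ∈ C, (∑ i, z i * c i ^ q) + (α ^ (q + 1) - 1) * (z j * c j ^ q) = 0 := by
        intro c hc
        have h := hw2 ((e : (Fin n → F) →ₗ[F] (Fin n → F)) c) ⟨c, hc, rfl⟩
        rw [← key z c]
        exact h
      have hz0 : z j = 0 := by
        have h1 := H x hxC
        have h2 : ∑ i, z i * x i ^ q = 0 := hdual_symm hF hQ hxD hzC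
        rw [h2, zero_add] at h1
        rcases mul_eq_zero.mp h1 with h | h
        · exact absurd h hlam
        rcases mul_eq_zero.mp h with h | h
        · exact h
        · exact absurd h (pow_ne_zero _ hxj)
      refine ⟨z, ⟨⟨hzC, ?_⟩, hz0⟩, rfl⟩
      intro c hc
      have h := H c hc
      rw [hz0, zero_mul, mul_zero, add_zero] at h
      exact h
    · rintro ⟨z, ⟨⟨hzC, hzD⟩, hzj⟩, rfl⟩
      refine ⟨⟨z, hzC, rfl⟩, ?_⟩
      rintro c' ⟨c, hc, rfl⟩
      show ∑ i, (s i * z i) * (s i * c i) ^ q = 0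
      rw [key, hzD c hc, hzj, zero_mul, mul_zero, add_zero]
  -- dimension count
  set H := C ⊓ hdual q C with hH_def
  set φ : H →ₗ[F] F := (LinearMap.proj j).comp H.subtype with hφ_def
  have hrange : LinearMap.range φ = ⊤ := by
    refine Submodule.eq_top_iff'.mpr fun a => ?_
    refine ⟨(a * (x j)⁻¹) • ⟨x, hxH⟩, ?_⟩
    simp only [hφ_def, LinearMap.comp_apply, LinearMap.proj_apply, Submodule.coe_smul,
      Submodule.coe_mk, Pi.smul_apply, smul_eq_mul]
    field_simp
    simp [hxj]
  have hker : Module.finrank F (LinearMap.ker φ) = m := by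
    have hrn := LinearMap.finrank_range_add_finrank_ker φ
    rw [hrange, finrank_top, Module.finrank_self, hhull] at hrn
    omega
  have hmap : H ⊓ LinearMap.ker (LinearMap.proj j)
      = (LinearMap.ker φ).map H.subtype := by
    ext w
    simp only [Submodule.mem_inf, Submodule.mem_map, LinearMap.mem_ker, LinearMap.proj_apply]
    constructor
    · rintro ⟨hwH, hwj⟩
      exact ⟨⟨w, hwH⟩, by simpa [hφ_def] using hwj, rfl⟩
    · rintro ⟨⟨u, hu⟩, hk, rfl⟩
      exact ⟨hu, by simpa [hφ_def] using hk⟩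
  refine ⟨D, ?_, ?_, ?_, ?_⟩
  · exact LinearEquiv.finrank_map_eq e C
  · rintro c' ⟨z, hz, rfl⟩ hne'
    rw [hwt]
    refine hd z hz ?_
    rintro rfl
    exact hne' (map_zero _)
  · obtain ⟨c, hc, hc0, hcd⟩ := hd'
    refine ⟨(e : (Fin n → F) →ₗ[F] (Fin n → F)) c, ⟨c, hc, rfl⟩, ?_, by rw [hwt]; exact hcd⟩
    simp only [LinearEquiv.coe_coe]
    exact fun h => hc0 (e.map_eq_zero_iff.mp h)
  · rw [hhullD, LinearEquiv.finrank_map_eq, hmap,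
      Submodule.finrank_map_subtype_eq, hker]
lemma aux {q n : ℕ} (hq3 : 3 ≤ q) {F : Type*} [Field F] [Fintype F]
    (hF : Fintype.card F = q ^ 2) (hQ : ∃ φ : F →+* F, ∀ x : F, φ x = x ^ q) (d : ℕ) :
    ∀ (t ℓ : ℕ) (C : Submodule F (Fin n → F)),
      (∀ c ∈ C, c ≠ 0 → d ≤ wt c) → (∃ c ∈ C, c ≠ 0 ∧ wt c = d) →
      Module.finrank F ↥(C ⊓ hdual q C) = ℓ + t →
      ∃ D : Submodule F (Fin n → F),
        Module.finrank F ↥D = Module.finrank F ↥C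
        ∧ (∀ c ∈ D, c ≠ 0 → d ≤ wt c) ∧ (∃ c ∈ D, c ≠ 0 ∧ wt c = d)
        ∧ Module.finrank F ↥(D ⊓ hdual q D) = ℓ := by
  intro t
  induction t with
  | zero => exact fun ℓ C hd hd' hhull => ⟨C, rfl, hd, hd', by simpa using hhull⟩
  | succ t ih =>
    intro ℓ C hd hd' hhull
    obtain ⟨D, hD1, hD2, hD3, hD4⟩ := step hq3 hF hQ d C hd hd'
      (m := ℓ + t) (by rw [hhull]; ring)
    obtain ⟨D', h1, h2, h3, h4⟩ := ih ℓ D hD2 hD3 hD4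
    exact ⟨D', h1.trans hD1, h2, h3, h4⟩


/-- Let `q > 2` be a prime power.  If there is an `[n,k,d]_{q²}`
linear code whose Hermitian hull has dimension `ℓ′`, then for every `0 ≤ ℓ ≤ ℓ′` there
is an `[n,k,d]_{q²}` linear code whose Hermitian hull has dimension exactly `ℓ`. -/
theorem exists_code_hermitianHull_dim_eq_of_le
    {q n k d ℓ' : ℕ} (hq : IsPrimePow q) (hq2 : 2 < q)
    {F : Type*} [Field F] [Fintype F] (hF : Fintype.card F = q ^ 2)
    (C : Submodule F (Fin n → F))
    (hdim : Module.finrank F ↥C = k)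
    (hd : ∀ c ∈ C, c ≠ 0 → d ≤ wt c) (hd' : ∃ c ∈ C, c ≠ 0 ∧ wt c = d)
    (hhull : Module.finrank F ↥(C ⊓ hdual q C) = ℓ') :
    ∀ ℓ ≤ ℓ', ∃ D : Submodule F (Fin n → F),
      Module.finrank F ↥D = k
      ∧ (∀ c ∈ D, c ≠ 0 → d ≤ wt c) ∧ (∃ c ∈ D, c ≠ 0 ∧ wt c = d)
      ∧ Module.finrank F ↥(D ⊓ hdual q D) = ℓ := by

  intro ℓ hℓ
  obtain ⟨p, e, hp, he, hpe⟩ := hq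
  have hp' : Nat.Prime p := Nat.prime_iff.mpr hp
  have hcardF : Fintype.card F = p ^ (2 * e) := by
    rw [hF, ← hpe, ← pow_mul, mul_comm]
  haveI : CharP F (ringChar F) := ringChar.charP F
  obtain ⟨nn, hrprime, hcard'⟩ := FiniteField.card F (ringChar F)
  have hrp : ringChar F = p := by
    have h1 : ringChar F ∣ p ^ (2 * e) := by
      rw [← hcardF, hcard']
      exact dvd_pow_self _ nn.pos.ne'
    exact (Nat.prime_dvd_prime_iff_eq hrprime hp').mp (hrprime.dvd_of_dvd_pow h1)
  haveI : CharP F p := hrp ▸ ringChar.charP F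
  haveI : Fact p.Prime := ⟨hp'⟩
  have hQ : ∃ φ : F →+* F, ∀ x : F, φ x = x ^ q :=
    ⟨iterateFrobenius F p e, fun x => by rw [iterateFrobenius_def, hpe]⟩
  obtain ⟨D, h1, h2, h3, h4⟩ := aux (by omega) hF hQ d (ℓ' - ℓ) ℓ C hd hd'
    (by rw [hhull]; omega)
  exact ⟨D, h1.trans hdim, h2, h3, h4⟩

end
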